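/- For complex numbers a, b, we have |e^{ia} − e^{ib}| ≤ |a − b| when a, b are real; consequently, for u, v, h ∈ L²(0,2π), ‖(e^{iℐ(u)} − e^{iℐ(v)}) h‖_{L²} ≤ 2 (‖u‖_{L²} + ‖v‖_{L²}) ‖u − v‖_{L²} ‖h‖_{L²}, where ℐ(w)(x) = (1/(2π)) ∫₀^{2π} ∫_θ^x ( |w(y)|² − (1/(2π))‖w‖²_{L²} ) dy dθ. -/

import Mathlib

open Real MeasureTheory intervalIntegral Complex


private lemma key_exp_aux (t : ℝ) : ‖Complex.exp (Complex.I * t) - 1‖ ≤ |t| := by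
  have he : Complex.exp (Complex.I * t) - 1 = ↑(Real.cos t - 1) + ↑(Real.sin t) * Complex.I := by
    rw [mul_comm, Complex.exp_mul_I]
    push_cast
    ring
  have hsq : ‖Complex.exp (Complex.I * t) - 1‖ ^ 2 = (Real.cos t - 1) ^ 2 + Real.sin t ^ 2 := by
    rw [he, Complex.sq_norm, Complex.normSq_add_mul_I]
  have h1 : |Real.sin (t / 2)| ≤ |t / 2| := Real.abs_sin_le_abs
  have h2 : Real.sin (t / 2) ^ 2 ≤ (t / 2) ^ 2 := by
    have := mul_self_le_mul_self (abs_nonneg _) h1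
    simpa [abs_mul_abs_self, sq] using this
  have hc := Real.cos_sq (t / 2)
  rw [show 2 * (t / 2) = t by ring] at hc
  have h4 : (Real.cos t - 1) ^ 2 + Real.sin t ^ 2 ≤ t ^ 2 := by
    nlinarith [Real.sin_sq_add_cos_sq t, Real.sin_sq_add_cos_sq (t / 2)]
  nlinarith [norm_nonneg (Complex.exp (Complex.I * t) - 1), abs_nonneg t, _root_.sq_abs t]

private lemma key_exp (a b : ℝ) :
    ‖Complex.exp (Complex.I * a) - Complex.exp (Complex.I * b)‖ ≤ |a - b| := by
  have he : Complex.exp (Complex.I * a) - Complex.exp (Complex.I * b)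
      = Complex.exp (Complex.I * b) * (Complex.exp (Complex.I * (a - b : ℝ)) - 1) := by
    rw [mul_sub, mul_one, ← Complex.exp_add]
    push_cast
    ring_nf
  rw [he, norm_mul]
  have hb : ‖Complex.exp (Complex.I * b)‖ = 1 := by
    rw [mul_comm, Complex.norm_exp_ofReal_mul_I]
  rw [hb, one_mul]
  exact key_exp_aux _


private lemma aesm_norm {f : ℝ → ℂ} {s : Set ℝ}
    (hf : IntegrableOn (fun y => ‖f y‖ ^ 2) s volume) :
    AEStronglyMeasurable (fun y => ‖f y‖) (volume.restrict s) := by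
  have h2 : AEStronglyMeasurable (fun y => Real.sqrt (‖f y‖ ^ 2)) (volume.restrict s) :=
    Real.continuous_sqrt.comp_aestronglyMeasurable hf.aestronglyMeasurable
  simpa [Real.sqrt_sq (norm_nonneg _)] using h2

private lemma mul_intervalIntegrable {f g : ℝ → ℂ} {a b : ℝ}
    (hf : IntervalIntegrable (fun y => ‖f y‖ ^ 2) volume a b)
    (hg : IntervalIntegrable (fun y => ‖g y‖ ^ 2) volume a b) :
    IntervalIntegrable (fun y => ‖f y‖ * ‖g y‖) volume a b := by
  rw [intervalIntegrable_iff] at *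
  refine Integrable.mono (hf.add hg) ((aesm_norm hf).mul (aesm_norm hg)) ?_
  refine Filter.Eventually.of_forall fun y => ?_
  simp only [Real.norm_eq_abs, Pi.add_apply]
  rw [_root_.abs_of_nonneg (by positivity), _root_.abs_of_nonneg (by positivity)]
  nlinarith [norm_nonneg (f y), norm_nonneg (g y), sq_nonneg (‖f y‖ - ‖g y‖)]

private lemma cs_int {f g : ℝ → ℂ} {b : ℝ} (hb : 0 ≤ b)
    (hf : IntervalIntegrable (fun y => ‖f y‖ ^ 2) volume 0 b)
    (hg : IntervalIntegrable (fun y => ‖g y‖ ^ 2) volume 0 b) :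
    ∫ y in (0:ℝ)..b, ‖f y‖ * ‖g y‖ ≤
      (∫ y in (0:ℝ)..b, ‖f y‖ ^ 2) ^ ((1:ℝ)/2) * (∫ y in (0:ℝ)..b, ‖g y‖ ^ 2) ^ ((1:ℝ)/2) := by
  rw [intervalIntegrable_iff_integrableOn_Ioc_of_le hb] at hf hg
  rw [integral_of_le hb, integral_of_le hb, integral_of_le hb]
  have hpq : Real.HolderConjugate 2 2 := Real.HolderConjugate.two_two
  have h2 : (ENNReal.ofReal (2:ℝ)) = 2 := by
    rw [ENNReal.ofReal_ofNat]
  have hmf : MemLp (fun y => ‖f y‖) (ENNReal.ofReal 2) (volume.restrict (Set.Ioc 0 b)) := by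
    rw [h2]
    exact (memLp_two_iff_integrable_sq (aesm_norm hf)).mpr hf
  have hmg : MemLp (fun y => ‖g y‖) (ENNReal.ofReal 2) (volume.restrict (Set.Ioc 0 b)) := by
    rw [h2]
    exact (memLp_two_iff_integrable_sq (aesm_norm hg)).mpr hg
  have := MeasureTheory.integral_mul_le_Lp_mul_Lq_of_nonneg hpq
    (Filter.Eventually.of_forall fun y => norm_nonneg (f y))
    (Filter.Eventually.of_forall fun y => norm_nonneg (g y)) hmf hmg
  simpa [Real.rpow_two] using this

private lemma hsub' {g : ℝ → ℝ} (hg : IntervalIntegrable g volume 0 (2*π)) {t : ℝ}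
    (ht : t ∈ Set.Icc (0:ℝ) (2*π)) : IntervalIntegrable g volume 0 t :=
  hg.mono_set (by
    rw [Set.uIcc_of_le ht.1, Set.uIcc_of_le (by positivity : (0:ℝ) ≤ 2*π)]
    exact Set.Icc_subset_Icc le_rfl ht.2)

private lemma theta_repr {g : ℝ → ℝ} (hg : IntervalIntegrable g volume 0 (2*π)) {x : ℝ}
    (hx : x ∈ Set.Icc (0:ℝ) (2*π)) :
    (∫ θ in (0:ℝ)..(2*π), ∫ y in θ..x, g y)
      = ∫ θ in (0:ℝ)..(2*π), ((∫ y in (0:ℝ)..x, g y) - ∫ y in (0:ℝ)..θ, g y) := by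
  refine integral_congr fun θ hθ => ?_
  rw [Set.uIcc_of_le (by positivity : (0:ℝ) ≤ 2*π)] at hθ
  exact (integral_interval_sub_left (hsub' hg hx) (hsub' hg hθ)).symm

private lemma primitive_cont {g : ℝ → ℝ} (hg : IntervalIntegrable g volume 0 (2*π)) :
    ContinuousOn (fun t => ∫ y in (0:ℝ)..t, g y) (Set.uIcc 0 (2*π)) :=
  continuousOn_primitive_interval (by
    rw [Set.uIcc_of_le (by positivity : (0:ℝ) ≤ 2*π)]
    exact (intervalIntegrable_iff_integrableOn_Icc_of_le (by positivity)).mp hg)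

private lemma phase_diff_bound {g1 g2 : ℝ → ℝ}
    (hg1 : IntervalIntegrable g1 volume 0 (2*π)) (hg2 : IntervalIntegrable g2 volume 0 (2*π))
    {x : ℝ} (hx : x ∈ Set.Icc (0:ℝ) (2*π)) {M : ℝ}
    (hM : ∀ θ, θ ∈ Set.Icc (0:ℝ) (2*π) → |∫ y in θ..x, (g1 y - g2 y)| ≤ M) :
    |(1/(2*π)) * (∫ θ in (0:ℝ)..(2*π), ∫ y in θ..x, g1 y)
      - (1/(2*π)) * (∫ θ in (0:ℝ)..(2*π), ∫ y in θ..x, g2 y)| ≤ M := by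
  have hb : (0:ℝ) ≤ 2*π := by positivity
  have hπ : (0:ℝ) < 2*π := by positivity
  rw [theta_repr hg1 hx, theta_repr hg2 hx, ← mul_sub]
  have hc1 : ContinuousOn (fun θ => (∫ y in (0:ℝ)..x, g1 y) - ∫ y in (0:ℝ)..θ, g1 y)
      (Set.uIcc 0 (2*π)) := continuousOn_const.sub (primitive_cont hg1)
  have hc2 : ContinuousOn (fun θ => (∫ y in (0:ℝ)..x, g2 y) - ∫ y in (0:ℝ)..θ, g2 y)
      (Set.uIcc 0 (2*π)) := continuousOn_const.sub (primitive_cont hg2)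
  rw [← integral_sub hc1.intervalIntegrable hc2.intervalIntegrable]
  have key : ∀ θ ∈ Set.Icc (0:ℝ) (2*π),
      |(((∫ y in (0:ℝ)..x, g1 y) - ∫ y in (0:ℝ)..θ, g1 y)
        - ((∫ y in (0:ℝ)..x, g2 y) - ∫ y in (0:ℝ)..θ, g2 y))| ≤ M := by
    intro θ hθ
    rw [integral_interval_sub_left (hsub' hg1 hx) (hsub' hg1 hθ),
      integral_interval_sub_left (hsub' hg2 hx) (hsub' hg2 hθ),
      ← integral_sub
        (hg1.mono_set (Set.uIcc_subset_uIcc (by rw [Set.uIcc_of_le hb]; exact hθ)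
          (by rw [Set.uIcc_of_le hb]; exact hx)))
        (hg2.mono_set (Set.uIcc_subset_uIcc (by rw [Set.uIcc_of_le hb]; exact hθ)
          (by rw [Set.uIcc_of_le hb]; exact hx)))]
    exact hM θ hθ
  calc |(1/(2*π)) * ∫ θ in (0:ℝ)..(2*π), (((∫ y in (0:ℝ)..x, g1 y) - ∫ y in (0:ℝ)..θ, g1 y)
        - ((∫ y in (0:ℝ)..x, g2 y) - ∫ y in (0:ℝ)..θ, g2 y))|
      ≤ (1/(2*π)) * ∫ θ in (0:ℝ)..(2*π), |(((∫ y in (0:ℝ)..x, g1 y) - ∫ y in (0:ℝ)..θ, g1 y)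
        - ((∫ y in (0:ℝ)..x, g2 y) - ∫ y in (0:ℝ)..θ, g2 y))| := by
        rw [abs_mul, abs_of_pos (by positivity : (0:ℝ) < 1/(2*π))]
        exact mul_le_mul_of_nonneg_left (abs_integral_le_integral_abs hb) (by positivity)
    _ ≤ (1/(2*π)) * ∫ θ in (0:ℝ)..(2*π), M := by
        refine mul_le_mul_of_nonneg_left ?_ (by positivity)
        exact integral_mono_on hb ((hc1.sub hc2).abs.intervalIntegrable)
          intervalIntegrable_const key
    _ = M := by
        rw [intervalIntegral.integral_const, smul_eq_mul, sub_zero]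
        field_simp

private lemma gauge_cont {g : ℝ → ℝ} (hg : IntervalIntegrable g volume 0 (2*π)) :
    ContinuousOn (fun x => (1/(2*π)) * ∫ θ in (0:ℝ)..(2*π), ∫ y in θ..x, g y)
      (Set.uIcc 0 (2*π)) := by
  have hb : (0:ℝ) ≤ 2*π := by positivity
  have heq : ∀ x ∈ Set.uIcc (0:ℝ) (2*π),
      (1/(2*π)) * ((2*π) * (∫ y in (0:ℝ)..x, g y)
          - ∫ θ in (0:ℝ)..(2*π), ∫ y in (0:ℝ)..θ, g y)
        = (1/(2*π)) * ∫ θ in (0:ℝ)..(2*π), ∫ y in θ..x, g y := by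
    intro x hx
    rw [Set.uIcc_of_le hb] at hx
    rw [theta_repr hg hx,
      integral_sub intervalIntegrable_const (primitive_cont hg).intervalIntegrable,
      intervalIntegral.integral_const, smul_eq_mul, sub_zero]
  refine ContinuousOn.congr ?_ (fun x hx => (heq x hx).symm)
  exact continuousOn_const.mul ((continuousOn_const.mul (primitive_cont hg)).sub
    continuousOn_const)


/-- The mean-zero periodic primitive `ℐ(f)` of `|f|² - (1/2π)‖f‖²_{L²(𝕋)}`. -/
noncomputable def gaugePhase (f : ℝ → ℂ) (x : ℝ) : ℝ :=
  (1 / (2 * π)) * ∫ θ in (0:ℝ)..(2 * π),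
    ∫ y in θ..x, (‖f y‖ ^ 2 - (1 / (2 * π)) * ∫ z in (0:ℝ)..(2 * π), ‖f z‖ ^ 2)

/-- `|e^{ia} - e^{ib}| ≤ |a - b|` for real `a, b`, and the resulting `L²` estimate
for the difference of gauge factors. -/
theorem exp_gauge_estimate :
    (∀ a b : ℝ, ‖Complex.exp (Complex.I * a) - Complex.exp (Complex.I * b)‖ ≤ |a - b|) ∧
    ∀ u v h : ℝ → ℂ,
      IntervalIntegrable (fun y => ‖u y‖ ^ 2) volume 0 (2 * π) →
      IntervalIntegrable (fun y => ‖v y‖ ^ 2) volume 0 (2 * π) →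
      IntervalIntegrable (fun y => ‖u y - v y‖ ^ 2) volume 0 (2 * π) →
      IntervalIntegrable (fun y => ‖h y‖ ^ 2) volume 0 (2 * π) →
      (∫ x in (0:ℝ)..(2 * π),
          ‖(Complex.exp (Complex.I * gaugePhase u x)
              - Complex.exp (Complex.I * gaugePhase v x)) * h x‖ ^ 2) ^ ((1:ℝ)/2) ≤
        2 * ((∫ y in (0:ℝ)..(2 * π), ‖u y‖ ^ 2) ^ ((1:ℝ)/2)
              + (∫ y in (0:ℝ)..(2 * π), ‖v y‖ ^ 2) ^ ((1:ℝ)/2))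
          * (∫ y in (0:ℝ)..(2 * π), ‖u y - v y‖ ^ 2) ^ ((1:ℝ)/2)
          * (∫ y in (0:ℝ)..(2 * π), ‖h y‖ ^ 2) ^ ((1:ℝ)/2) := by
  refine ⟨key_exp, ?_⟩
  intro u v h hu hv huv hh
  have hb : (0:ℝ) ≤ 2 * π := by positivity
  -- notation
  set A := (∫ y in (0:ℝ)..(2 * π), ‖u y‖ ^ 2) ^ ((1:ℝ)/2) with hAdef
  set B := (∫ y in (0:ℝ)..(2 * π), ‖v y‖ ^ 2) ^ ((1:ℝ)/2) with hBdef
  set D := (∫ y in (0:ℝ)..(2 * π), ‖u y - v y‖ ^ 2) ^ ((1:ℝ)/2) with hDdef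
  set H := (∫ y in (0:ℝ)..(2 * π), ‖h y‖ ^ 2) ^ ((1:ℝ)/2) with hHdef
  have hA0 : 0 ≤ A := Real.rpow_nonneg
    (intervalIntegral.integral_nonneg hb fun y _ => by positivity) _
  have hB0 : 0 ≤ B := Real.rpow_nonneg
    (intervalIntegral.integral_nonneg hb fun y _ => by positivity) _
  have hD0 : 0 ≤ D := Real.rpow_nonneg
    (intervalIntegral.integral_nonneg hb fun y _ => by positivity) _
  have hH2 : 0 ≤ ∫ y in (0:ℝ)..(2 * π), ‖h y‖ ^ 2 :=
    intervalIntegral.integral_nonneg hb fun y _ => by positivity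
  -- the L¹ difference of squares
  have hd : IntervalIntegrable (fun y => ‖u y‖ ^ 2 - ‖v y‖ ^ 2) volume 0 (2*π) := hu.sub hv
  have hdabs : IntervalIntegrable (fun y => |‖u y‖ ^ 2 - ‖v y‖ ^ 2|) volume 0 (2*π) := hd.abs
  set J := ∫ y in (0:ℝ)..(2*π), |‖u y‖ ^ 2 - ‖v y‖ ^ 2| with hJdef
  have hJ0 : 0 ≤ J := intervalIntegral.integral_nonneg hb fun y _ => abs_nonneg _
  -- J ≤ (A + B) * D  via Cauchy–Schwarz
  have hprod1 : IntervalIntegrable (fun y => ‖u y‖ * ‖u y - v y‖) volume 0 (2*π) :=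
    mul_intervalIntegrable hu huv
  have hprod2 : IntervalIntegrable (fun y => ‖v y‖ * ‖u y - v y‖) volume 0 (2*π) :=
    mul_intervalIntegrable hv huv
  have hJ : J ≤ (A + B) * D := by
    have hpt : ∀ y ∈ Set.Icc (0:ℝ) (2*π),
        |‖u y‖ ^ 2 - ‖v y‖ ^ 2| ≤ ‖u y‖ * ‖u y - v y‖ + ‖v y‖ * ‖u y - v y‖ := by
      intro y _
      have h1 := abs_le.mp (abs_norm_sub_norm_le (u y) (v y))
      rw [abs_le]
      constructor <;> nlinarith [norm_nonneg (u y), norm_nonneg (v y),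
        norm_nonneg (u y - v y)]
    calc J ≤ ∫ y in (0:ℝ)..(2*π), (‖u y‖ * ‖u y - v y‖ + ‖v y‖ * ‖u y - v y‖) :=
          integral_mono_on hb hdabs (hprod1.add hprod2) hpt
      _ = (∫ y in (0:ℝ)..(2*π), ‖u y‖ * ‖u y - v y‖)
          + ∫ y in (0:ℝ)..(2*π), ‖v y‖ * ‖u y - v y‖ := integral_add hprod1 hprod2
      _ ≤ A * D + B * D := add_le_add (cs_int hb hu huv) (cs_int hb hv huv)
      _ = (A + B) * D := by ring
  -- pointwise bound on the phase difference
  have hg1 : IntervalIntegrable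
      (fun y => ‖u y‖ ^ 2 - (1 / (2 * π)) * ∫ z in (0:ℝ)..(2 * π), ‖u z‖ ^ 2)
      volume 0 (2*π) := hu.sub intervalIntegrable_const
  have hg2 : IntervalIntegrable
      (fun y => ‖v y‖ ^ 2 - (1 / (2 * π)) * ∫ z in (0:ℝ)..(2 * π), ‖v z‖ ^ 2)
      volume 0 (2*π) := hv.sub intervalIntegrable_const
  have hphase : ∀ x ∈ Set.Icc (0:ℝ) (2*π),
      |gaugePhase u x - gaugePhase v x| ≤ 2 * J := by
    intro x hx
    have hM : ∀ θ, θ ∈ Set.Icc (0:ℝ) (2*π) →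
        |∫ y in θ..x, ((‖u y‖ ^ 2 - (1 / (2 * π)) * ∫ z in (0:ℝ)..(2 * π), ‖u z‖ ^ 2)
          - (‖v y‖ ^ 2 - (1 / (2 * π)) * ∫ z in (0:ℝ)..(2 * π), ‖v z‖ ^ 2))| ≤ 2 * J := by
      intro θ hθ
      set c : ℝ := ((1 / (2 * π)) * ∫ z in (0:ℝ)..(2 * π), ‖u z‖ ^ 2)
        - ((1 / (2 * π)) * ∫ z in (0:ℝ)..(2 * π), ‖v z‖ ^ 2) with hcdef
      have hre : ∀ y : ℝ,
          (‖u y‖ ^ 2 - (1 / (2 * π)) * ∫ z in (0:ℝ)..(2 * π), ‖u z‖ ^ 2)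
            - (‖v y‖ ^ 2 - (1 / (2 * π)) * ∫ z in (0:ℝ)..(2 * π), ‖v z‖ ^ 2)
          = (‖u y‖ ^ 2 - ‖v y‖ ^ 2) - c := fun y => by rw [hcdef]; ring
      simp_rw [hre]
      -- bound on the constant
      have hc2 : (2*π) * |c| ≤ J := by
        have : c = (1 / (2 * π)) * ∫ z in (0:ℝ)..(2*π), (‖u z‖ ^ 2 - ‖v z‖ ^ 2) := by
          rw [integral_sub hu hv, hcdef]; ring
        rw [this, abs_mul, abs_of_pos (by positivity : (0:ℝ) < 1/(2*π)), ← mul_assoc]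
        rw [show (2*π) * (1/(2*π)) = 1 by field_simp, one_mul]
        exact (abs_integral_le_integral_abs hb)
      have hsubset : Set.uIoc θ x ⊆ Set.Ioc (0:ℝ) (2*π) := by
        rw [Set.uIoc]
        exact Set.Ioc_subset_Ioc (le_min hθ.1 hx.1)
          (max_le hθ.2 hx.2)
      have hintc : IntegrableOn (fun y => |(‖u y‖ ^ 2 - ‖v y‖ ^ 2) - c|)
          (Set.Ioc (0:ℝ) (2*π)) volume :=
        ((intervalIntegrable_iff_integrableOn_Ioc_of_le hb).mp
          (hd.sub intervalIntegrable_const)).abs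
      have hintd : IntegrableOn (fun y => |‖u y‖ ^ 2 - ‖v y‖ ^ 2|)
          (Set.Ioc (0:ℝ) (2*π)) volume :=
        (intervalIntegrable_iff_integrableOn_Ioc_of_le hb).mp hdabs
      calc |∫ y in θ..x, ((‖u y‖ ^ 2 - ‖v y‖ ^ 2) - c)|
          ≤ ∫ y in Set.uIoc θ x, |(‖u y‖ ^ 2 - ‖v y‖ ^ 2) - c| := by
            simpa [Real.norm_eq_abs] using
              intervalIntegral.norm_integral_le_integral_norm_uIoc
                (f := fun y => (‖u y‖ ^ 2 - ‖v y‖ ^ 2) - c) (a := θ) (b := x) (μ := volume)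
        _ ≤ ∫ y in Set.Ioc (0:ℝ) (2*π), |(‖u y‖ ^ 2 - ‖v y‖ ^ 2) - c| :=
            setIntegral_mono_set hintc
              (Filter.Eventually.of_forall fun y => abs_nonneg _)
              (HasSubset.Subset.eventuallyLE hsubset)
        _ ≤ ∫ y in Set.Ioc (0:ℝ) (2*π), (|‖u y‖ ^ 2 - ‖v y‖ ^ 2| + |c|) := by
            refine integral_mono hintc (hintd.add (integrableOn_const
              measure_Ioc_lt_top.ne)) fun y => abs_sub _ _
        _ = J + (2*π) * |c| := by
            rw [integral_add hintd (integrableOn_const measure_Ioc_lt_top.ne),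
              setIntegral_const, Real.volume_real_Ioc_of_le hb, sub_zero,
              smul_eq_mul, hJdef, integral_of_le hb]
        _ ≤ 2 * J := by linarith
    have := phase_diff_bound hg1 hg2 hx hM
    simpa [gaugePhase] using this
  -- pointwise bound on the gauge factors
  have hexp : ∀ x ∈ Set.Icc (0:ℝ) (2*π),
      ‖Complex.exp (Complex.I * gaugePhase u x)
        - Complex.exp (Complex.I * gaugePhase v x)‖ ≤ 2 * ((A + B) * D) := by
    intro x hx
    calc ‖Complex.exp (Complex.I * gaugePhase u x)
          - Complex.exp (Complex.I * gaugePhase v x)‖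
        ≤ |gaugePhase u x - gaugePhase v x| := key_exp _ _
      _ ≤ 2 * J := hphase x hx
      _ ≤ 2 * ((A + B) * D) := by linarith
  -- continuity of the gauge factors
  have hgpu : ContinuousOn (gaugePhase u) (Set.uIcc 0 (2*π)) := gauge_cont hg1
  have hgpv : ContinuousOn (gaugePhase v) (Set.uIcc 0 (2*π)) := gauge_cont hg2
  have hcontE : ContinuousOn (fun x => ‖Complex.exp (Complex.I * gaugePhase u x)
      - Complex.exp (Complex.I * gaugePhase v x)‖ ^ 2) (Set.uIcc 0 (2*π)) := by
    have h1 : ContinuousOn (fun x => Complex.exp (Complex.I * gaugePhase u x))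
        (Set.uIcc 0 (2*π)) :=
      Complex.continuous_exp.comp_continuousOn
        (continuousOn_const.mul (Complex.continuous_ofReal.comp_continuousOn hgpu))
    have h2 : ContinuousOn (fun x => Complex.exp (Complex.I * gaugePhase v x))
        (Set.uIcc 0 (2*π)) :=
      Complex.continuous_exp.comp_continuousOn
        (continuousOn_const.mul (Complex.continuous_ofReal.comp_continuousOn hgpv))
    exact ((h1.sub h2).norm).pow 2
  -- main integral estimate
  simp only [norm_mul, mul_pow]
  have hintLHS : IntervalIntegrable (fun x => ‖Complex.exp (Complex.I * gaugePhase u x)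
      - Complex.exp (Complex.I * gaugePhase v x)‖ ^ 2 * ‖h x‖ ^ 2) volume 0 (2*π) :=
    hh.continuousOn_mul hcontE
  have hmain : (∫ x in (0:ℝ)..(2*π), ‖Complex.exp (Complex.I * gaugePhase u x)
        - Complex.exp (Complex.I * gaugePhase v x)‖ ^ 2 * ‖h x‖ ^ 2)
      ≤ (2 * ((A + B) * D)) ^ 2 * ∫ y in (0:ℝ)..(2*π), ‖h y‖ ^ 2 := by
    rw [← intervalIntegral.integral_const_mul]
    refine integral_mono_on hb hintLHS (hh.const_mul _) fun x hx => ?_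
    have hE := hexp x hx
    have : ‖Complex.exp (Complex.I * gaugePhase u x)
        - Complex.exp (Complex.I * gaugePhase v x)‖ ^ 2 ≤ (2 * ((A + B) * D)) ^ 2 :=
      pow_le_pow_left₀ (norm_nonneg _) hE 2
    exact mul_le_mul_of_nonneg_right this (by positivity)
  have hLHS0 : 0 ≤ ∫ x in (0:ℝ)..(2*π), ‖Complex.exp (Complex.I * gaugePhase u x)
      - Complex.exp (Complex.I * gaugePhase v x)‖ ^ 2 * ‖h x‖ ^ 2 :=
    intervalIntegral.integral_nonneg hb fun x _ => by positivity
  have hC0 : 0 ≤ 2 * ((A + B) * D) := by positivity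
  calc (∫ x in (0:ℝ)..(2*π), ‖Complex.exp (Complex.I * gaugePhase u x)
        - Complex.exp (Complex.I * gaugePhase v x)‖ ^ 2 * ‖h x‖ ^ 2) ^ ((1:ℝ)/2)
      ≤ ((2 * ((A + B) * D)) ^ 2 * ∫ y in (0:ℝ)..(2*π), ‖h y‖ ^ 2) ^ ((1:ℝ)/2) :=
        Real.rpow_le_rpow hLHS0 hmain (by norm_num)
    _ = 2 * ((A + B) * D) * H := by
        rw [Real.mul_rpow (by positivity) hH2, hHdef, ← Real.rpow_natCast
          (2 * ((A + B) * D)) 2, ← Real.rpow_mul hC0]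
        norm_num
    _ = 2 * (A + B) * D * H := by ring
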